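/- Let a : H × H → ℝ be a bounded coercive symmetric bilinear form on a Hilbert space H, W₀ ⊆ H a closed subspace, and 𝒞 : H → W₀ the linear operator defined by a(𝒞v, w) = a(v, w) for all w ∈ W₀ (the a-orthogonal projection onto W₀). Given a bounded projection π_H : H → V_H with kernel W ⊇ W₀ and V_H = im(π_H), define V^ms := (id − 𝒞)V_H. Then: (i) (id − 𝒞) : V_H → V^ms is a bijection with inverse π_H|_{V^ms}, so dim V^ms = dim V_H; (ii) H = V^ms ⊕ W; and (iii) a(v^ms, w) = 0 for all v^ms ∈ V^ms and w ∈ W₀. -/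

import Mathlib

/-- **The ideal multiscale space `V^ms = (id − 𝒞)V_H`.**  `H` is a Hilbert space,
`a` a bounded coercive symmetric bilinear form, `W₀ ⊆ H` a closed subspace,
`𝒞 : H → W₀` the `a`-orthogonal projection onto `W₀` (`a(𝒞v, w) = a(v, w)` for all
`w ∈ W₀`), and `π` a bounded projection with `V_H = im π` and `W₀ ⊆ W = ker π`.
Then (i) `(id − 𝒞)` is a bijection from `V_H` onto `V^ms` with inverse `π|_{V^ms}`
(so `dim V^ms = dim V_H`), (ii) `H = V^ms ⊕ W`, (iii) `V^ms ⊥_a W₀`. -/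
theorem ideal_multiscale_space
    {H : Type*} [NormedAddCommGroup H] [InnerProductSpace ℝ H] [CompleteSpace H]
    (a : H →ₗ[ℝ] H →ₗ[ℝ] ℝ)
    (hsym : ∀ v w : H, a v w = a w v)
    (Ca αa : ℝ) (hαa : 0 < αa)
    (hbdd : ∀ v w : H, |a v w| ≤ Ca * ‖v‖ * ‖w‖)
    (hcoer : ∀ v : H, αa * ‖v‖ ^ 2 ≤ a v v)
    (W0 : Submodule ℝ H) (hW0closed : IsClosed (W0 : Set H))
    (π 𝒞 : H →L[ℝ] H) (hπproj : ∀ v : H, π (π v) = π v)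
    (hW0ker : W0 ≤ LinearMap.ker (π : H →ₗ[ℝ] H))
    (h𝒞mem : ∀ v : H, 𝒞 v ∈ W0)
    (h𝒞eq : ∀ v : H, ∀ w ∈ W0, a (𝒞 v) w = a v w) :
    (∀ v ∈ LinearMap.range (π : H →ₗ[ℝ] H), π ((ContinuousLinearMap.id ℝ H - 𝒞) v) = v) ∧
    Set.BijOn (⇑(ContinuousLinearMap.id ℝ H - 𝒞)) (LinearMap.range (π : H →ₗ[ℝ] H))
      (Submodule.map ((ContinuousLinearMap.id ℝ H - 𝒞) : H →ₗ[ℝ] H)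
        (LinearMap.range (π : H →ₗ[ℝ] H))) ∧
    Module.rank ℝ
        (Submodule.map ((ContinuousLinearMap.id ℝ H - 𝒞) : H →ₗ[ℝ] H)
          (LinearMap.range (π : H →ₗ[ℝ] H))) =
      Module.rank ℝ (LinearMap.range (π : H →ₗ[ℝ] H)) ∧
    IsCompl
      (Submodule.map ((ContinuousLinearMap.id ℝ H - 𝒞) : H →ₗ[ℝ] H)
        (LinearMap.range (π : H →ₗ[ℝ] H)))
      (LinearMap.ker (π : H →ₗ[ℝ] H)) ∧
    (∀ vms ∈ Submodule.map ((ContinuousLinearMap.id ℝ H - 𝒞) : H →ₗ[ℝ] H)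
        (LinearMap.range (π : H →ₗ[ℝ] H)),
      ∀ w ∈ W0, a vms w = 0) := by

  set f := (ContinuousLinearMap.id ℝ H - 𝒞) with hf
  have hfapp : ∀ v : H, f v = v - 𝒞 v := fun v => rfl
  have hπ𝒞 : ∀ v : H, π (𝒞 v) = 0 := fun v => hW0ker (h𝒞mem v)
  have hπf : ∀ v : H, π (f v) = π v := by
    intro v
    rw [hfapp, map_sub, hπ𝒞, sub_zero]
  have h1 : ∀ v ∈ LinearMap.range (π : H →ₗ[ℝ] H), π (f v) = v := by
    rintro v ⟨u, rfl⟩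
    rw [hπf, ContinuousLinearMap.coe_coe, hπproj]
  have hinj : Set.InjOn (⇑f) (LinearMap.range (π : H →ₗ[ℝ] H)) := by
    intro x hx y hy hxy
    have := congrArg π hxy
    rw [h1 x hx, h1 y hy] at this
    exact this
  have hbij : Set.BijOn (⇑f) (LinearMap.range (π : H →ₗ[ℝ] H))
      (Submodule.map (f : H →ₗ[ℝ] H) (LinearMap.range (π : H →ₗ[ℝ] H))) := by
    refine ⟨fun x hx => ⟨x, hx, rfl⟩, hinj, ?_⟩
    rintro y ⟨x, hx, rfl⟩
    exact ⟨x, hx, rfl⟩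
  refine ⟨h1, hbij, ?_, ?_, ?_⟩
  · -- rank
    let g : (LinearMap.range (π : H →ₗ[ℝ] H)) →ₗ[ℝ]
        (Submodule.map (f : H →ₗ[ℝ] H) (LinearMap.range (π : H →ₗ[ℝ] H))) :=
      LinearMap.codRestrict _ ((f : H →ₗ[ℝ] H).comp (LinearMap.range (π : H →ₗ[ℝ] H)).subtype)
        (fun x => ⟨x, x.2, rfl⟩)
    have hgbij : Function.Bijective g := by
      constructor
      · intro x y hxy
        have : f (x : H) = f (y : H) := congrArg Subtype.val hxy
        exact Subtype.ext (hinj x.2 y.2 this)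
      · rintro ⟨y, x, hx, rfl⟩
        exact ⟨⟨x, hx⟩, rfl⟩
    exact (LinearEquiv.ofBijective g hgbij).symm.rank_eq
  · -- IsCompl
    constructor
    · rw [Submodule.disjoint_def]
      rintro x ⟨v, hv, rfl⟩ hker
      have hker2 : π (f v) = 0 := hker
      have : v = 0 := by
        have := h1 v hv
        rw [hker2] at this; exact this.symm
      simp [this]
    · rw [codisjoint_iff_le_sup]
      intro h _
      refine Submodule.mem_sup.2 ⟨f (π h), ⟨π h, ⟨h, rfl⟩, rfl⟩, h - f (π h), ?_, add_sub_cancel _ _⟩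
      rw [LinearMap.mem_ker, map_sub, ContinuousLinearMap.coe_coe, hπf, hπproj, sub_self]
  · rintro vms ⟨v, hv, rfl⟩ w hw
    show a (f v) w = 0
    rw [hfapp, map_sub, LinearMap.sub_apply, h𝒞eq v w hw, sub_self]
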